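/- arXiv:math/9809133 — 2 statements merged into one kernel-verified Lean document; each statement's English description precedes it below -/
import Mathlib

section
/- Let N be a complete Riemannian manifold, x0 ∈ N, and let g ∈ π₁(N,x0) have a minimal representative geodesic loop γ of length d, parametrized by arclength. If d_N(γ(0), γ(d/2)) < d/2, then there exist h₁, h₂ ∈ π₁(N,x0) with g = h₂·h₁ such that d_Ñ(x̃0, h₁·x̃0) < d and d_Ñ(x̃0, h₂·x̃0) < d, where x̃0 is a lift of x0 to the universal cover Ñ. -/
open Metric MeasureTheory Filter ENNReal
open scoped Manifold

/-- `γ` is a unit-speed minimal geodesic on the interval `[a,b]`: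
it realizes distances there. -/
def IsMinGeodesicOn {M : Type*} [MetricSpace M] (γ : ℝ → M) (a b : ℝ) : Prop :=
  ∀ s ∈ Set.Icc a b, ∀ t ∈ Set.Icc a b, dist (γ s) (γ t) = |s - t|

/-- `(M,d)` is a geodesic metric space: any two points are joined by a minimal geodesic.
This holds for the distance of any complete Riemannian manifold. -/
def IsGeodesicMetricSpace (M : Type*) [MetricSpace M] : Prop :=
  ∀ x y : M, ∃ γ : ℝ → M, γ 0 = x ∧ γ (dist x y) = y ∧ IsMinGeodesicOn γ 0 (dist x y)

/-- The length of a path in a metric space, as its total variation. -/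
noncomputable def pathELength {X : Type*} [MetricSpace X] {x y : X} (p : Path x y) : ℝ≥0∞ :=
  eVariationOn p Set.univ

attribute [local instance] Path.Homotopic.setoid

/-- The homotopy class of a loop, as an element of the fundamental group. -/
noncomputable def loopClass {X : Type*} [TopologicalSpace X] {x : X} (p : Path x x) :
    FundamentalGroup X x :=
  (show FundamentalGroupoid.mk x ⟶ FundamentalGroupoid.mk x from ⟦p⟧)

/-- The universal (metric) cover of a pointed metric space `(N, x0)`, together with its
deck transformation action by the fundamental group `π₁(N, x0)`.  The covering projection
is a local isometry, so that the distance on the cover is the lifted (Riemannian)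
distance; the deck transformations act freely and transitively on fibers, by isometries,
and `deck g (basept)` is the endpoint of the lift starting at `basept` of any loop
representing `g` (monodromy). -/
structure UniversalCoverSetup (N : Type) [MetricSpace N] (x0 : N) where
  cover : Type
  covMetric : MetricSpace cover
  proj : cover → N
  basept : cover
  proj_base : proj basept = x0
  covering : IsCoveringMap proj
  simplyConnected : SimplyConnectedSpace cover
  complete : CompleteSpace cover
  geodesic : IsGeodesicMetricSpace cover
  locIsom : ∀ x : cover, ∃ ε > (0 : ℝ), ∀ y ∈ Metric.ball x ε, ∀ z ∈ Metric.ball x ε,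
    dist (proj y) (proj z) = dist y z
  deck : FundamentalGroup N x0 →* (cover ≃ᵢ cover)
  deck_proj : ∀ (g : FundamentalGroup N x0) (x : cover), proj (deck g x) = proj x
  deck_free : ∀ (g : FundamentalGroup N x0) (x : cover), deck g x = x → g = 1
  deck_transitive : ∀ x y : cover, proj x = proj y → ∃ g : FundamentalGroup N x0, deck g x = y
  monodromy : ∀ (g : FundamentalGroup N x0) (q : Path basept (deck g basept)),
    loopClass ((q.map covering.continuous).cast proj_base.symm
      (((deck_proj g basept).trans proj_base).symm)) = g

attribute [instance] UniversalCoverSetup.covMetric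

namespace UniversalCoverSetup

variable {N : Type} [MetricSpace N] {x0 : N}

/-- The length `d_Ñ(x̃0, g·x̃0)` associated to an element `g` of the fundamental group:
the length of a minimal representative geodesic loop of `g`. -/
noncomputable def len (S : UniversalCoverSetup N x0) (g : FundamentalGroup N x0) : ℝ :=
  dist S.basept (S.deck g S.basept)

/-- `γt` is (the lift of) a minimal representative geodesic loop of `g`: a minimal
geodesic in the universal cover from `x̃0` to `g·x̃0`, parametrized by arclength. -/
def IsMinRepLift (S : UniversalCoverSetup N x0) (g : FundamentalGroup N x0)
    (γt : ℝ → S.cover) : Prop :=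
  γt 0 = S.basept ∧ γt (S.len g) = S.deck g S.basept ∧ IsMinGeodesicOn γt 0 (S.len g)

end UniversalCoverSetup

section Aux

variable {E : Type} [MetricSpace E] {N' : Type} [MetricSpace N']

/-- A unit-speed minimal geodesic is continuous on its interval. -/
lemma minGeodesic_continuousOn (σ : ℝ → N') (a b : ℝ)
    (hgeod : ∀ s ∈ Set.Icc a b, ∀ t ∈ Set.Icc a b, dist (σ s) (σ t) = |s - t|) :
    ContinuousOn σ (Set.Icc a b) := by
  refine LipschitzOnWith.continuousOn (K := 1) ?_
  rw [lipschitzOnWith_iff_dist_le_mul]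
  intro x hx y hy
  rw [hgeod x hx y hy, Real.dist_eq]
  simp

/-- If `f` is a continuous lift (through a locally isometric `proj`) of a unit-speed
minimal geodesic on `[a,b]`, then `dist (f a) (f b) ≤ b - a`. -/
lemma dist_lift_le (proj : E → N')
    (hloc : ∀ x : E, ∃ ε > (0 : ℝ), ∀ y ∈ Metric.ball x ε, ∀ z ∈ Metric.ball x ε,
      dist (proj y) (proj z) = dist y z)
    (σ : ℝ → N') (f : ℝ → E) (a b : ℝ) (hab : a ≤ b)
    (hf : ContinuousOn f (Set.Icc a b))
    (hproj : ∀ t ∈ Set.Icc a b, proj (f t) = σ t)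
    (hgeod : ∀ s ∈ Set.Icc a b, ∀ t ∈ Set.Icc a b, dist (σ s) (σ t) = |s - t|) :
    dist (f a) (f b) ≤ b - a := by
  set s : Set ℝ := {t | dist (f a) (f t) ≤ t - a} with hs
  have hsub : Set.Icc a b ⊆ s := by
    have hclosed : IsClosed (s ∩ Set.Icc a b) := by
      have hcont : ContinuousOn (fun t => dist (f a) (f t) - (t - a)) (Set.Icc a b) :=
        ((continuous_const.dist continuous_id).comp_continuousOn hf).sub (by fun_prop)
      have heq : s ∩ Set.Icc a b = Set.Icc a b ∩
          (fun t => dist (f a) (f t) - (t - a)) ⁻¹' Set.Iic 0 := by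
        ext t
        simp only [hs, Set.mem_inter_iff, Set.mem_setOf_eq, Set.mem_preimage, Set.mem_Iic]
        constructor
        · rintro ⟨h1, h2⟩; exact ⟨h2, by linarith⟩
        · rintro ⟨h1, h2⟩; exact ⟨by linarith, h1⟩
      rw [heq]
      exact hcont.preimage_isClosed_of_isClosed isClosed_Icc isClosed_Iic
    have ha : a ∈ s := by simp [hs]
    refine hclosed.Icc_subset_of_forall_exists_gt ha ?_
    rintro x ⟨hxs, hxa, hxb⟩ y hy
    obtain ⟨ε, εpos, hiso⟩ := hloc (f x)
    have hxmem : x ∈ Set.Icc a b := ⟨hxa, le_of_lt hxb⟩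
    obtain ⟨δ, δpos, hδ⟩ := Metric.continuousWithinAt_iff.1 (hf x hxmem) ε εpos
    set t := min b (min (x + δ / 2) y) with ht
    have hxt : x < t := by
      apply lt_min hxb (lt_min (by linarith) hy)
    have htb : t ≤ b := min_le_left _ _
    have htmem : t ∈ Set.Icc a b := ⟨le_trans hxa hxt.le, htb⟩
    have htx : dist t x < δ := by
      rw [Real.dist_eq, abs_of_nonneg (by linarith)]
      have : t ≤ x + δ / 2 := le_trans (min_le_right _ _) (min_le_left _ _)
      linarith
    have hft : f t ∈ Metric.ball (f x) ε := hδ htmem htx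
    have hfx : f x ∈ Metric.ball (f x) ε := Metric.mem_ball_self εpos
    have hde : dist (f t) (f x) = t - x := by
      rw [← hiso (f t) hft (f x) hfx, hproj t htmem, hproj x hxmem, hgeod t htmem x hxmem,
        abs_of_nonneg (by linarith)]
    refine ⟨t, ?_, hxt, le_trans (min_le_right _ _) (min_le_right _ _)⟩
    have : dist (f a) (f t) ≤ dist (f a) (f x) + dist (f x) (f t) := dist_triangle _ _ _
    rw [dist_comm (f x) (f t), hde] at this
    simp only [hs, Set.mem_setOf_eq] at hxs ⊢
    linarith
  have := hsub ⟨hab, le_refl b⟩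
  exact this

/-- Lifting a minimal geodesic across one trivialized chunk of a covering. -/
lemma chunk_lift (proj : E → N')
    (hloc : ∀ x : E, ∃ ε > (0 : ℝ), ∀ y ∈ Metric.ball x ε, ∀ z ∈ Metric.ball x ε,
      dist (proj y) (proj z) = dist y z)
    {I : Type*} [TopologicalSpace I] (T : Bundle.Trivialization I proj)
    (σ : ℝ → N') (a b : ℝ) (hab : a ≤ b)
    (hgeod : ∀ s ∈ Set.Icc a b, ∀ t ∈ Set.Icc a b, dist (σ s) (σ t) = |s - t|)
    (hU : ∀ t ∈ Set.Icc a b, σ t ∈ T.baseSet)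
    (p : E) (hp : proj p = σ a) :
    ∃ q : E, proj q = σ b ∧ dist p q ≤ b - a := by
  set f : ℝ → E := fun t => T.toOpenPartialHomeomorph.symm (σ t, (T p).2) with hfdef
  have hmem : ∀ t ∈ Set.Icc a b, (σ t, (T p).2) ∈ T.target := fun t ht =>
    T.mem_target.2 (hU t ht)
  have hσc : ContinuousOn σ (Set.Icc a b) := minGeodesic_continuousOn σ a b hgeod
  have hfc : ContinuousOn f (Set.Icc a b) := by
    refine T.toOpenPartialHomeomorph.continuousOn_symm.comp ?_ ?_
    · exact hσc.prodMk continuousOn_const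
    · intro t ht; exact hmem t ht
  have hfproj : ∀ t ∈ Set.Icc a b, proj (f t) = σ t := fun t ht =>
    T.proj_symm_apply (hmem t ht)
  have hfa : f a = p := by
    have hpsrc : p ∈ T.source := T.mem_source.2 (hp ▸ hU a ⟨le_refl a, hab⟩)
    have h1 : (σ a, (T p).2) = T p := by
      have := T.coe_fst hpsrc
      rw [← hp] at *
      exact Prod.ext (this.symm) rfl
    rw [hfdef]
    simp only [h1]
    exact T.toOpenPartialHomeomorph.left_inv hpsrc
  refine ⟨f b, hfproj b ⟨hab, le_refl b⟩, ?_⟩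
  rw [← hfa]
  exact dist_lift_le proj hloc σ f a b hab hfc hfproj hgeod

end Aux

/-- If a minimal representative geodesic loop `γ = proj ∘ γ̃` of `g ∈ π₁(N, x0)`, of
length `d = d_Ñ(x̃0, g·x̃0)`, is not minimal to its halfway point,
`d_N(γ(0), γ(d/2)) < d/2`, then `g = h₂·h₁` for elements `h₁, h₂ ∈ π₁(N, x0)` with
`d_Ñ(x̃0, h₁·x̃0) < d` and `d_Ñ(x̃0, h₂·x̃0) < d`. -/
theorem splitting_of_non_halfway_minimal_loop
    (n : ℕ) (N : Type) [MetricSpace N]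
    [ChartedSpace (EuclideanSpace ℝ (Fin n)) N] [IsManifold (𝓡 n) (⊤ : ℕ∞) N]
    [CompleteSpace N] [PathConnectedSpace N] (hgeo : IsGeodesicMetricSpace N)
    (x0 : N) (S : UniversalCoverSetup N x0)
    (g : FundamentalGroup N x0) (γt : ℝ → S.cover) (hγt : S.IsMinRepLift g γt)
    (hhalf : dist (S.proj (γt 0)) (S.proj (γt (S.len g / 2))) < S.len g / 2) :
    ∃ h₁ h₂ : FundamentalGroup N x0, g = h₂ * h₁ ∧
      S.len h₁ < S.len g ∧ S.len h₂ < S.len g := by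
  obtain ⟨hγ0, hγd, hγgeo⟩ := hγt
  set d := S.len g with hd
  have d0 : 0 ≤ d := dist_nonneg
  have hproj0 : S.proj (γt 0) = x0 := by rw [hγ0, S.proj_base]
  have dpos : 0 < d := by
    by_contra h
    push_neg at h
    have := dist_nonneg (x := S.proj (γt 0)) (y := S.proj (γt (d / 2)))
    linarith
  set m := γt (d / 2) with hmdef
  have hhalfmem : d / 2 ∈ Set.Icc (0 : ℝ) d := ⟨by linarith, by linarith⟩
  have hm1 : dist S.basept m = d / 2 := by
    have := hγgeo 0 ⟨le_refl 0, d0⟩ (d / 2) hhalfmem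
    rw [hγ0] at this
    rw [this]
    rw [abs_of_nonpos (by linarith)]
    ring
  have hm2 : dist m (S.deck g S.basept) = d / 2 := by
    have := hγgeo (d / 2) hhalfmem d ⟨d0, le_refl d⟩
    rw [hγd] at this
    rw [this, abs_of_nonpos (by linarith)]
    ring
  -- a minimal geodesic in the base from proj m to x0, of length L < d/2
  obtain ⟨σ, hσ0, hσL, hσgeo⟩ := hgeo (S.proj m) x0
  set L := dist (S.proj m) x0 with hLdef
  have hL : L < d / 2 := by
    rw [hLdef, dist_comm]
    rwa [hproj0] at hhalf
  have L0 : 0 ≤ L := dist_nonneg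
  have hσc : ContinuousOn σ (Set.Icc 0 L) := minGeodesic_continuousOn σ 0 L hσgeo
  -- lift it to the cover, starting from m, by a sSup argument
  set A : Set ℝ := {t | t ∈ Set.Icc 0 L ∧ ∃ p : S.cover, S.proj p = σ t ∧ dist m p ≤ t}
    with hAdef
  have hA0 : (0 : ℝ) ∈ A := ⟨⟨le_refl 0, L0⟩, m, hσ0.symm, by simp⟩
  have hAbdd : BddAbove A := ⟨L, fun t ht => ht.1.2⟩
  have hAne : A.Nonempty := ⟨0, hA0⟩
  set T := sSup A with hTdef
  have hT0 : 0 ≤ T := le_csSup hAbdd hA0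
  have hTL : T ≤ L := csSup_le hAne fun t ht => ht.1.2
  have hTmem : T ∈ Set.Icc (0 : ℝ) L := ⟨hT0, hTL⟩
  -- local trivialization around σ T
  have hsurj : ∀ y : N, ∃ e, S.proj e = y := by
    have hclopen : IsClopen (Set.range S.proj) := by
      refine ⟨?_, S.covering.isOpenMap.isOpen_range⟩
      rw [← isOpen_compl_iff, isOpen_iff_mem_nhds]
      intro x hx
      obtain ⟨_, U, hxU, hU, _, H, _⟩ := S.covering x
      refine Filter.mem_of_superset (hU.mem_nhds hxU) ?_
      rintro y hy ⟨e, rfl⟩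
      have := (H ⟨e, hy⟩).2
      exact hx ⟨this.1, this.2⟩
    have := hclopen.eq_univ ⟨x0, S.basept, S.proj_base⟩
    intro y
    have hy : y ∈ Set.range S.proj := this.symm ▸ Set.mem_univ y
    exact hy
  obtain ⟨e0, he0⟩ := hsurj (σ T)
  haveI : Nonempty (S.proj ⁻¹' {σ T}) := ⟨⟨e0, he0⟩⟩
  let Tr := (S.covering (σ T)).toTrivialization
  have hTr : σ T ∈ Tr.baseSet := (S.covering (σ T)).mem_toTrivialization_baseSet
  obtain ⟨δ, δpos, hδ⟩ := Metric.mem_nhdsWithin_iff.1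
    ((hσc T hTmem) (Tr.open_baseSet.mem_nhds hTr))
  have hδ' : ∀ s ∈ Set.Icc 0 L, dist s T < δ → σ s ∈ Tr.baseSet := fun s hs hst =>
    hδ ⟨Metric.mem_ball.2 hst, hs⟩
  -- T ∈ A
  have hTA : T ∈ A := by
    obtain ⟨s, hsA, hs⟩ := exists_lt_of_lt_csSup hAne (show T - δ / 2 < T by linarith)
    have hsT : s ≤ T := le_csSup hAbdd hsA
    obtain ⟨⟨hs0, hsL⟩, p, hpproj, hpd⟩ := hsA
    have hIsub : Set.Icc s T ⊆ Set.Icc 0 L := Set.Icc_subset_Icc hs0 hTL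
    have hU : ∀ t ∈ Set.Icc s T, σ t ∈ Tr.baseSet := by
      intro t ht
      refine hδ' t (hIsub ht) ?_
      rw [Real.dist_eq, abs_of_nonpos (by linarith [ht.2])]
      linarith [ht.1]
    obtain ⟨q, hqproj, hqd⟩ := chunk_lift S.proj S.locIsom Tr σ s T hsT
      (fun u hu v hv => hσgeo u (hIsub hu) v (hIsub hv)) hU p hpproj
    exact ⟨hTmem, q, hqproj, by
      calc dist m q ≤ dist m p + dist p q := dist_triangle _ _ _
        _ ≤ s + (T - s) := add_le_add hpd hqd
        _ = T := by ring⟩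
  -- T = L
  have hTeq : T = L := by
    by_contra h
    have hTL' : T < L := lt_of_le_of_ne hTL h
    set t' := min L (T + δ / 2) with ht'
    have hTt' : T < t' := lt_min hTL' (by linarith)
    have ht'L : t' ≤ L := min_le_left _ _
    obtain ⟨_, p, hpproj, hpd⟩ := hTA
    have hIsub : Set.Icc T t' ⊆ Set.Icc 0 L := Set.Icc_subset_Icc hT0 ht'L
    have hU : ∀ t ∈ Set.Icc T t', σ t ∈ Tr.baseSet := by
      intro t ht
      refine hδ' t (hIsub ht) ?_
      rw [Real.dist_eq, abs_of_nonneg (by linarith [ht.1])]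
      have : t ≤ T + δ / 2 := le_trans ht.2 (min_le_right _ _)
      linarith
    obtain ⟨q, hqproj, hqd⟩ := chunk_lift S.proj S.locIsom Tr σ T t' hTt'.le
      (fun u hu v hv => hσgeo u (hIsub hu) v (hIsub hv)) hU p hpproj
    have ht'A : t' ∈ A := ⟨⟨by linarith, ht'L⟩, q, hqproj, by
      calc dist m q ≤ dist m p + dist p q := dist_triangle _ _ _
        _ ≤ T + (t' - T) := add_le_add hpd hqd
        _ = t' := by ring⟩
    exact absurd (le_csSup hAbdd ht'A) (not_le.2 hTt')
  -- extract the endpoint of the lift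
  rw [hTeq] at hTA
  obtain ⟨_, p, hpproj, hpd⟩ := hTA
  rw [hσL] at hpproj
  have hdp : dist m p < d / 2 := lt_of_le_of_lt hpd hL
  -- the deck transformation sending basept to p
  obtain ⟨h, hh⟩ := S.deck_transitive S.basept p (by rw [S.proj_base, hpproj])
  refine ⟨h⁻¹ * g, h, by group, ?_, ?_⟩
  · -- len (h⁻¹ * g) = dist p (deck g basept) < d
    have key : S.deck h (S.deck (h⁻¹ * g) S.basept) = S.deck g S.basept := by
      have e : h * (h⁻¹ * g) = g := by group
      calc S.deck h (S.deck (h⁻¹ * g) S.basept)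
          = (S.deck h * S.deck (h⁻¹ * g)) S.basept := rfl
        _ = S.deck (h * (h⁻¹ * g)) S.basept := by rw [← map_mul]
        _ = S.deck g S.basept := by rw [e]
    have hlen : S.len (h⁻¹ * g) = dist p (S.deck g S.basept) := by
      rw [UniversalCoverSetup.len, ← hh, ← key]
      exact ((S.deck h).isometry.dist_eq _ _).symm
    rw [hlen, hd]
    calc dist p (S.deck g S.basept) ≤ dist p m + dist m (S.deck g S.basept) :=
          dist_triangle _ _ _
      _ < d / 2 + d / 2 := by rw [dist_comm p m, hm2]; linarith
      _ = d := by ring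
  · -- len h = dist basept p < d
    have hlen : S.len h = dist S.basept p := by rw [UniversalCoverSetup.len, hh]
    rw [hlen, hd]
    calc dist S.basept p ≤ dist S.basept m + dist m p := dist_triangle _ _ _
      _ < d / 2 + d / 2 := by rw [hm1]; linarith
      _ = d := by ring
end

section
/- Let N be a complete Riemannian manifold with x0 ∈ N and π₁(N,x0) infinitely generated, and let {g_k} be a set of halfway generators based at x0 with minimal representative geodesic loops γ_k of lengths d_k. Then the lengths d_k diverge to infinity as k → ∞. -/
open Metric MeasureTheory Filter ENNReal
open scoped Manifold

attribute [local instance] Path.Homotopic.setoid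

/-- In a geodesic space, any point of `closedBall o (r+δ)` is within `δ` of
`closedBall o r`. -/
lemma exists_near_of_geodesic {M : Type*} [MetricSpace M] (hgeo : IsGeodesicMetricSpace M)
    (o x : M) {r δ : ℝ} (hr : 0 ≤ r) (hδ : 0 ≤ δ) (hx : dist x o ≤ r + δ) :
    ∃ y, dist y o ≤ r ∧ dist x y ≤ δ := by
  rcases le_or_gt (dist x o) r with h | h
  · exact ⟨x, h, by simp [hδ]⟩
  · obtain ⟨γ, h0, hD, hmin⟩ := hgeo o x
    set D := dist o x with hDdef
    have hxo : dist x o = D := dist_comm x o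
    have hrD : r ≤ D := le_of_lt (hxo ▸ h)
    have hD0 : 0 ≤ D := dist_nonneg
    refine ⟨γ r, ?_, ?_⟩
    · have := hmin r ⟨hr, hrD⟩ 0 ⟨le_refl 0, hD0⟩
      rw [h0] at this
      simpa [abs_of_nonneg hr] using le_of_eq this
    · have := hmin D ⟨hD0, le_refl D⟩ r ⟨hr, hrD⟩
      rw [hD] at this
      have habs : |D - r| = D - r := abs_of_nonneg (by linarith)
      rw [this, habs]
      have : D ≤ r + δ := hxo ▸ hx
      linarith

/-- Hopf–Rinow: a complete, locally compact geodesic metric space is proper. -/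
lemma properSpace_of_geodesic (M : Type*) [MetricSpace M] [CompleteSpace M]
    [LocallyCompactSpace M] (hgeo : IsGeodesicMetricSpace M) : ProperSpace M := by
  rcases isEmpty_or_nonempty M with hM | hM
  · exact ⟨fun x r => (IsEmpty.false x).elim⟩
  obtain ⟨o⟩ := hM
  set A : Set ℝ := {r | IsCompact (closedBall o r)} with hA
  have hmono : ∀ {r r' : ℝ}, r' ≤ r → r ∈ A → r' ∈ A := by
    intro r r' hle hr
    exact hr.of_isClosed_subset Metric.isClosed_closedBall (closedBall_subset_closedBall hle)
  have h0 : (0 : ℝ) ∈ A := by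
    simp only [hA, Set.mem_setOf_eq, Metric.closedBall_zero]
    exact isCompact_singleton
  -- closedness step
  have step2 : ∀ R : ℝ, 0 ≤ R → (∀ r, 0 ≤ r → r < R → r ∈ A) → R ∈ A := by
    intro R hR0 hIH
    rcases eq_or_lt_of_le hR0 with h | hRpos
    · exact h ▸ h0
    refine TotallyBounded.isCompact_of_isClosed ?_ Metric.isClosed_closedBall
    rw [Metric.totallyBounded_iff]
    intro ε hε
    set r : ℝ := max 0 (R - ε / 3) with hrdef
    have hr0 : 0 ≤ r := le_max_left _ _
    have hrR : r < R := max_lt hRpos (by linarith)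
    have hrA : r ∈ A := hIH r hr0 hrR
    obtain ⟨t, htfin, htcov⟩ := (Metric.totallyBounded_iff.1 hrA.totallyBounded) (ε / 3)
      (by linarith)
    refine ⟨t, htfin, ?_⟩
    intro x hx
    have hxr : dist x o ≤ r + ε / 3 := by
      have : R - ε / 3 ≤ r := le_max_right _ _
      calc dist x o ≤ R := hx
        _ ≤ r + ε / 3 := by linarith
    obtain ⟨y, hy, hxy⟩ := exists_near_of_geodesic hgeo o x hr0 (by linarith) hxr
    have hy' : y ∈ ⋃ c ∈ t, ball c (ε / 3) := htcov hy
    simp only [Set.mem_iUnion, mem_ball] at hy' ⊢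
    obtain ⟨c, hc, hyc⟩ := hy'
    exact ⟨c, hc, by
      calc dist x c ≤ dist x y + dist y c := dist_triangle _ _ _
        _ < ε / 3 + ε / 3 := by linarith [mem_ball.1 hyc]
        _ < ε := by linarith⟩
  -- openness step
  have step1 : ∀ R : ℝ, 0 ≤ R → R ∈ A → ∃ δ > 0, R + δ ∈ A := by
    intro R hR0 hRA
    obtain ⟨K', hK', hsub⟩ := exists_compact_superset hRA
    obtain ⟨δ, hδ0, hδ⟩ := hRA.exists_thickening_subset_open isOpen_interior hsub
    refine ⟨δ / 2, by linarith, ?_⟩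
    have hsub2 : closedBall o (R + δ / 2) ⊆ thickening δ (closedBall o R) := by
      intro x hx
      obtain ⟨y, hy, hxy⟩ := exists_near_of_geodesic hgeo o x hR0 (by linarith)
        (mem_closedBall.1 hx)
      rw [mem_thickening_iff]
      exact ⟨y, hy, lt_of_le_of_lt hxy (by linarith)⟩
    exact hK'.of_isClosed_subset Metric.isClosed_closedBall
      (hsub2.trans (hδ.trans interior_subset))
  -- combine
  have hall : ∀ R : ℝ, 0 ≤ R → R ∈ A := by
    by_contra hcon
    push_neg at hcon
    obtain ⟨R, hR0, hRA⟩ := hcon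
    set T : Set ℝ := {r | 0 ≤ r ∧ r ∉ A} with hT
    have hTne : T.Nonempty := ⟨R, hR0, hRA⟩
    have hTbd : BddBelow T := ⟨0, fun t ht => ht.1⟩
    set m : ℝ := sInf T with hm
    have hm0 : 0 ≤ m := le_csInf hTne fun t ht => ht.1
    have hmA : m ∈ A := by
      refine step2 m hm0 ?_
      intro r hr0 hrm
      by_contra hrA
      exact absurd (csInf_le hTbd ⟨hr0, hrA⟩) (not_le.2 hrm)
    obtain ⟨δ, hδ0, hδA⟩ := step1 m hm0 hmA
    have : m + δ ≤ m := by
      refine le_csInf hTne ?_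
      intro t ht
      by_contra hlt
      exact ht.2 (hmono (le_of_not_ge hlt) hδA)
    linarith
  constructor
  intro x r
  rcases le_or_gt 0 r with hr | hr
  · have : closedBall x r ⊆ closedBall o (r + dist x o) := by
      intro y hy
      calc dist y o ≤ dist y x + dist x o := dist_triangle _ _ _
        _ ≤ r + dist x o := by linarith [mem_closedBall.1 hy]
    exact (hall _ (by positivity)).of_isClosed_subset Metric.isClosed_closedBall this
  · simp [Metric.closedBall_eq_empty.2 hr]

lemma cover_locallyCompact {cover N : Type} [MetricSpace cover] [MetricSpace N] [ProperSpace N]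
    (proj : cover → N) (hopen : IsOpenMap proj)
    (locIsom : ∀ x : cover, ∃ ε > (0 : ℝ), ∀ y ∈ Metric.ball x ε, ∀ z ∈ Metric.ball x ε,
      dist (proj y) (proj z) = dist y z) : LocallyCompactSpace cover := by
  constructor
  intro x n hn
  obtain ⟨ε, hε0, hiso⟩ := locIsom x
  obtain ⟨ρ, hρ0, hρ⟩ := Metric.mem_nhds_iff.1 hn
  have hU : IsOpen (proj '' ball x (ε / 2)) := hopen _ isOpen_ball
  have hxU : proj x ∈ proj '' ball x (ε / 2) := ⟨x, mem_ball_self (by linarith), rfl⟩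
  obtain ⟨r₀, hr₀0, hr₀⟩ := Metric.mem_nhds_iff.1 (hU.mem_nhds hxU)
  set r : ℝ := min (r₀ / 2) (min (ε / 8) (ρ / 2)) with hrdef
  have hr0 : 0 < r := by positivity
  have hrr₀ : r < r₀ := by
    have : r ≤ r₀ / 2 := min_le_left _ _
    linarith
  have hrε : r < ε / 2 := by
    have : r ≤ ε / 8 := le_trans (min_le_right _ _) (min_le_left _ _)
    linarith
  have hrρ : r < ρ := by
    have : r ≤ ρ / 2 := le_trans (min_le_right _ _) (min_le_right _ _)
    linarith
  have hxball : x ∈ ball x ε := mem_ball_self hε0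
  have hhalf : ∀ y : cover, y ∈ ball x (ε / 2) → y ∈ ball x ε := fun y hy =>
    mem_ball.2 (lt_of_lt_of_le (mem_ball.1 hy) (by linarith))
  classical
  set φ : N → cover := fun z =>
    if h : ∃ y ∈ ball x (ε / 2), proj y = z then h.choose else x with hφdef
  have hφspec : ∀ z ∈ closedBall (proj x) r, φ z ∈ ball x (ε / 2) ∧ proj (φ z) = z := by
    intro z hz
    have hzU : z ∈ proj '' ball x (ε / 2) :=
      hr₀ (mem_ball.2 (lt_of_le_of_lt (mem_closedBall.1 hz) hrr₀))
    obtain ⟨y, hy, hyz⟩ := hzU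
    have hex : ∃ y ∈ ball x (ε / 2), proj y = z := ⟨y, hy, hyz⟩
    simp only [hφdef, dif_pos hex]
    exact ⟨hex.choose_spec.1, hex.choose_spec.2⟩
  have hlip : LipschitzOnWith 1 φ (closedBall (proj x) r) := by
    rw [lipschitzOnWith_iff_dist_le_mul]
    intro z hz w hw
    obtain ⟨hz1, hz2⟩ := hφspec z hz
    obtain ⟨hw1, hw2⟩ := hφspec w hw
    rw [NNReal.coe_one, one_mul]
    have := hiso (φ z) (hhalf _ hz1) (φ w) (hhalf _ hw1)
    rw [hz2, hw2] at this
    exact le_of_eq this.symm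
  have himg : φ '' closedBall (proj x) r = closedBall x r := by
    apply Set.Subset.antisymm
    · rintro _ ⟨z, hz, rfl⟩
      obtain ⟨hz1, hz2⟩ := hφspec z hz
      have := hiso (φ z) (hhalf _ hz1) x hxball
      rw [hz2] at this
      exact mem_closedBall.2 (this ▸ mem_closedBall.1 hz)
    · intro y hy
      have hyball : y ∈ ball x ε := mem_ball.2 (lt_of_le_of_lt (mem_closedBall.1 hy)
        (by linarith))
      have hzball : proj y ∈ closedBall (proj x) r := by
        have := hiso y hyball x hxball
        exact mem_closedBall.2 (this ▸ mem_closedBall.1 hy)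
      obtain ⟨h1, h2⟩ := hφspec (proj y) hzball
      have : dist (φ (proj y)) y = 0 := by
        have := hiso (φ (proj y)) (hhalf _ h1) y hyball
        rw [h2] at this
        simpa using this.symm
      have heq : φ (proj y) = y := by rwa [dist_eq_zero] at this
      exact ⟨proj y, hzball, heq⟩
  refine ⟨closedBall x r, ?_, ?_, ?_⟩
  · exact closedBall_mem_nhds x hr0
  · intro y hy
    exact hρ (mem_ball.2 (lt_of_le_of_lt (mem_closedBall.1 hy) hrρ))
  · rw [← himg]
    exact (isCompact_closedBall _ _).image_of_continuousOn hlip.continuousOn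

/-- If `π₁(N, x0)` is infinitely generated and `g_1, g_2, …` is a set of halfway
generators based at `x0` (an independent generating sequence, each `g_k` minimizing
`d_Ñ(x̃0, g·x̃0)` outside the subgroup generated by its predecessors, whose minimal
representative geodesic loops `γ_k` of lengths `d_k` are minimal halfway around), then
the lengths `d_k` diverge to infinity. -/
theorem halfway_generator_lengths_tendsto_atTop
    (n : ℕ) (N : Type) [MetricSpace N]
    [ChartedSpace (EuclideanSpace ℝ (Fin n)) N] [IsManifold (𝓡 n) (⊤ : ℕ∞) N]
    [CompleteSpace N] [PathConnectedSpace N] (hgeo : IsGeodesicMetricSpace N)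
    (x0 : N) (S : UniversalCoverSetup N x0)
    (hfg : ¬ Group.FG (FundamentalGroup N x0))
    (g : ℕ → FundamentalGroup N x0) (γt : ℕ → ℝ → S.cover)
    (hgen : Subgroup.closure (Set.range g) = ⊤)
    (hindep : ∀ k : ℕ, g k ∉ Subgroup.closure {h | ∃ j : ℕ, j < k ∧ g j = h})
    (hmin : ∀ (k : ℕ) (h : FundamentalGroup N x0),
      h ∉ Subgroup.closure {h' | ∃ j : ℕ, j < k ∧ g j = h'} → S.len (g k) ≤ S.len h)
    (hlift : ∀ k : ℕ, S.IsMinRepLift (g k) (γt k))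
    (hhalf : ∀ k : ℕ, dist (S.proj (γt k 0)) (S.proj (γt k (S.len (g k) / 2)))
      = S.len (g k) / 2) :
    Filter.Tendsto (fun k : ℕ => S.len (g k)) Filter.atTop Filter.atTop :=
  by
  -- N is locally compact and proper
  have hNloc : LocallyCompactSpace N :=
    ChartedSpace.locallyCompactSpace (EuclideanSpace ℝ (Fin n)) N
  have hNproper : ProperSpace N := properSpace_of_geodesic N hgeo
  have hCcomp : CompleteSpace S.cover := S.complete
  have hCloc : LocallyCompactSpace S.cover :=
    cover_locallyCompact S.proj S.covering.isOpenMap S.locIsom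
  have hCproper : ProperSpace S.cover := properSpace_of_geodesic _ S.geodesic
  -- ε-separation of deck translates
  obtain ⟨ε, hε0, hiso⟩ := S.locIsom S.basept
  have hsep : ∀ h : FundamentalGroup N x0, h ≠ 1 → ε ≤ S.len h := by
    intro h hne
    by_contra hlt
    push_neg at hlt
    have h1 : S.basept ∈ Metric.ball S.basept ε := Metric.mem_ball_self hε0
    have h2 : S.deck h S.basept ∈ Metric.ball S.basept ε :=
      Metric.mem_ball.2 (by rw [dist_comm]; exact hlt)
    have heq := hiso S.basept h1 (S.deck h S.basept) h2
    rw [S.deck_proj h S.basept, dist_self] at heq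
    have : S.deck h S.basept = S.basept := by
      rw [← dist_eq_zero]; rw [dist_comm]; exact heq.symm
    exact hne (S.deck_free h S.basept this)
  -- the generators are pairwise distinct
  have hginj : Function.Injective g := by
    intro j k hjk
    by_contra hne
    rcases lt_or_gt_of_ne hne with h | h
    · exact hindep k (Subgroup.subset_closure ⟨j, h, hjk⟩)
    · exact hindep j (Subgroup.subset_closure ⟨k, h, hjk.symm⟩)
  set p : ℕ → S.cover := fun k => S.deck (g k) S.basept with hp
  have hpair : ∀ j k : ℕ, j ≠ k → ε ≤ dist (p j) (p k) := by
    intro j k hjk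
    have hne : (g j)⁻¹ * g k ≠ 1 := by
      intro h
      apply hjk
      apply hginj
      exact (inv_mul_eq_one.1 h)
    have hdist : dist (p j) (p k) = S.len ((g j)⁻¹ * g k) := by
      have e1 : (S.deck (g j))⁻¹ (p j) = S.basept := by
        simp [hp]
      have e2 : (S.deck (g j))⁻¹ (p k) = S.deck ((g j)⁻¹ * g k) S.basept := by
        rw [map_mul, map_inv, IsometryEquiv.mul_apply]
      calc dist (p j) (p k)
          = dist ((S.deck (g j))⁻¹ (p j)) ((S.deck (g j))⁻¹ (p k)) :=
            ((S.deck (g j))⁻¹.dist_eq _ _).symm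
        _ = S.len ((g j)⁻¹ * g k) := by rw [e1, e2]; rfl
    rw [hdist]
    exact hsep _ hne
  -- only finitely many generators have length below any bound
  rw [Filter.tendsto_atTop]
  intro b
  have hfin : {k : ℕ | S.len (g k) < b}.Finite := by
    obtain ⟨t, htfin, htcov⟩ := (Metric.totallyBounded_iff.1
      (isCompact_closedBall S.basept b).totallyBounded) (ε / 2) (by linarith)
    by_contra hinf
    haveI : Infinite {k : ℕ // S.len (g k) < b} := Set.infinite_coe_iff.2 hinf
    haveI : Finite t := htfin.to_subtype
    have hmem : ∀ k : {k : ℕ // S.len (g k) < b}, ∃ c, ∃ hc : c ∈ t,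
        p k.1 ∈ Metric.ball c (ε / 2) := by
      intro k
      have hmem : p k.1 ∈ Metric.closedBall S.basept b :=
        Metric.mem_closedBall.2 (by rw [dist_comm]; exact le_of_lt k.2)
      have := htcov hmem
      simp only [Set.mem_iUnion] at this
      exact this
    choose c hc1 hc2 using hmem
    obtain ⟨j, k, hjk, hcjk⟩ := Finite.exists_ne_map_eq_of_infinite
      (fun k : {k : ℕ // S.len (g k) < b} => (⟨c k, hc1 k⟩ : t))
    have hcc : c j = c k := congrArg Subtype.val hcjk
    have hlt : dist (p j.1) (p k.1) < ε := by
      calc dist (p j.1) (p k.1) ≤ dist (p j.1) (c j) + dist (c j) (p k.1) :=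
            dist_triangle _ _ _
        _ < ε / 2 + ε / 2 := by
            have h1 := Metric.mem_ball.1 (hc2 j)
            have h2 := Metric.mem_ball.1 (hc2 k)
            rw [hcc, dist_comm (c k)] at *
            linarith [Metric.mem_ball.1 (hc2 j)]
        _ = ε := by ring
    have hne : j.1 ≠ k.1 := fun h => hjk (Subtype.ext h)
    exact absurd (hpair j.1 k.1 hne) (not_le.2 hlt)
  have := hfin.eventually_cofinite_notMem
  rw [Nat.cofinite_eq_atTop] at this
  exact this.mono fun k hk => not_lt.1 hk
end
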